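/- Fix $a \ge 0$. The function $f \colon \mathbb{R}^4 \to \mathbb{R}$ given by $f(x_2, y_2, x_3, y_3) = (x_3^2 + y_3^2)(12 + a + x_2^2 + y_2^2)$ is convex on the open set $\{(x_2,y_2,x_3,y_3) : x_2^2 + y_2^2 < 4\}$. -/
import Mathlib


set_option maxHeartbeats 1000000 in
/-- `(x₃² + y₃²)(12 + a + x₂² + y₂²)` is convex on `{x₂² + y₂² < 4}`. -/
theorem convexity_of_example_term (a : ℝ) (ha : 0 ≤ a) :
    ConvexOn ℝ {x : ℝ × ℝ × ℝ × ℝ | x.1 ^ 2 + x.2.1 ^ 2 < 4}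
      (fun x : ℝ × ℝ × ℝ × ℝ =>
        (x.2.2.1 ^ 2 + x.2.2.2 ^ 2) * (12 + a + x.1 ^ 2 + x.2.1 ^ 2)) := by
  constructor
  · rintro ⟨x2, y2, x3, y3⟩ hp ⟨X2, Y2, X3, Y3⟩ hq t u ht hu htu
    simp only [Set.mem_setOf_eq, Prod.smul_mk, Prod.mk_add_mk, smul_eq_mul] at *
    have hu' : u = 1 - t := by linarith
    subst hu'
    nlinarith [mul_nonneg ht hu, sq_nonneg (x2 - X2), sq_nonneg (y2 - Y2),
      mul_nonneg (mul_nonneg ht hu) (sq_nonneg (x2 - X2)),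
      mul_nonneg (mul_nonneg ht hu) (sq_nonneg (y2 - Y2)),
      mul_nonneg ht (sub_pos.2 hp).le, mul_nonneg hu (sub_pos.2 hq).le]
  · rintro ⟨x2, y2, x3, y3⟩ hp ⟨X2, Y2, X3, Y3⟩ hq t u ht hu htu
    simp only [Set.mem_setOf_eq, Prod.smul_mk, Prod.mk_add_mk, smul_eq_mul] at *
    have hu' : u = 1 - t := by linarith
    subst hu'
    set v3 : ℝ := t * x3 + (1 - t) * X3 with hv3
    set v4 : ℝ := t * y3 + (1 - t) * Y3 with hv4
    set h0 : ℝ := 12 + a + (t * x2 + (1 - t) * X2) ^ 2 + (t * y2 + (1 - t) * Y2) ^ 2 with hh0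
    set h1 : ℝ := 12 + a + x2 ^ 2 + y2 ^ 2 with hh1
    set h2 : ℝ := 12 + a + X2 ^ 2 + Y2 ^ 2 with hh2
    clear_value v3 v4 h0 h1 h2
    have h0pos : 0 < h0 := by rw [hh0]; positivity
    have h1pos : 0 < h1 := by rw [hh1]; positivity
    have h2pos : 0 < h2 := by rw [hh2]; positivity
    -- completing the square inequalities
    have key1' : (2 * h0 * (v3 * x3 + v4 * y3) - (x3 ^ 2 + y3 ^ 2) * h1) * h1
        ≤ h0 ^ 2 * (v3 ^ 2 + v4 ^ 2) := by
      linarith [sq_nonneg (h1 * x3 - h0 * v3), sq_nonneg (h1 * y3 - h0 * v4)]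
    have key1 : 2 * h0 * (v3 * x3 + v4 * y3) - h0 ^ 2 * (v3 ^ 2 + v4 ^ 2) / h1
        ≤ (x3 ^ 2 + y3 ^ 2) * h1 := by
      have := (le_div_iff₀ h1pos).2 key1'
      linarith
    have key2' : (2 * h0 * (v3 * X3 + v4 * Y3) - (X3 ^ 2 + Y3 ^ 2) * h2) * h2
        ≤ h0 ^ 2 * (v3 ^ 2 + v4 ^ 2) := by
      linarith [sq_nonneg (h2 * X3 - h0 * v3), sq_nonneg (h2 * Y3 - h0 * v4)]
    have key2 : 2 * h0 * (v3 * X3 + v4 * Y3) - h0 ^ 2 * (v3 ^ 2 + v4 ^ 2) / h2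
        ≤ (X3 ^ 2 + Y3 ^ 2) * h2 := by
      have := (le_div_iff₀ h2pos).2 key2'
      linarith
    -- concavity of 1/h on the disc
    have margin : 0 ≤ (12 + a) + t * (X2 ^ 2 + Y2 ^ 2) + (1 - t) * (x2 ^ 2 + y2 ^ 2)
        - ((x2 + X2) ^ 2 + (y2 + Y2) ^ 2) := by
      have e1 : 0 ≤ t * (4 - (x2 ^ 2 + y2 ^ 2)) := mul_nonneg ht (by linarith)
      have e2 : 0 ≤ (2 - t) * (4 - (X2 ^ 2 + Y2 ^ 2)) :=
        mul_nonneg (by linarith) (by linarith)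
      linarith [e1, e2, sq_nonneg (x2 - X2), sq_nonneg (y2 - Y2)]
    have key3' : (t * h2 + (1 - t) * h1) * h0 ≤ h1 * h2 := by
      rw [hh0, hh1, hh2]
      have e1 : 0 ≤ t * (1 - t) *
          ((x2 - X2) * (y2 + Y2) - (y2 - Y2) * (x2 + X2)) ^ 2 :=
        mul_nonneg (mul_nonneg ht hu) (sq_nonneg _)
      have e2 : 0 ≤ t * (1 - t) * (((x2 - X2) ^ 2 + (y2 - Y2) ^ 2) *
          ((12 + a) + t * (X2 ^ 2 + Y2 ^ 2) + (1 - t) * (x2 ^ 2 + y2 ^ 2)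
            - ((x2 + X2) ^ 2 + (y2 + Y2) ^ 2))) :=
        mul_nonneg (mul_nonneg ht hu) (mul_nonneg (by positivity) margin)
      linarith [e1, e2]
    have key3 : t / h1 + (1 - t) / h2 ≤ 1 / h0 := by
      rw [div_add_div _ _ (ne_of_gt h1pos) (ne_of_gt h2pos),
        div_le_div_iff₀ (by positivity) h0pos]
      linarith [key3']
    calc (v3 ^ 2 + v4 ^ 2) * h0
        = 2 * h0 * (v3 ^ 2 + v4 ^ 2) - h0 ^ 2 * (v3 ^ 2 + v4 ^ 2) * (1 / h0) := by
          field_simp; ring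
      _ ≤ 2 * h0 * (v3 ^ 2 + v4 ^ 2) - h0 ^ 2 * (v3 ^ 2 + v4 ^ 2) * (t / h1 + (1 - t) / h2) := by
          have := mul_le_mul_of_nonneg_left key3 (by positivity : (0:ℝ) ≤ h0 ^ 2 * (v3 ^ 2 + v4 ^ 2))
          linarith
      _ = t * (2 * h0 * (v3 * x3 + v4 * y3) - h0 ^ 2 * (v3 ^ 2 + v4 ^ 2) / h1)
          + (1 - t) * (2 * h0 * (v3 * X3 + v4 * Y3) - h0 ^ 2 * (v3 ^ 2 + v4 ^ 2) / h2) := by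
          rw [hv3, hv4]; ring
      _ ≤ t * ((x3 ^ 2 + y3 ^ 2) * h1) + (1 - t) * ((X3 ^ 2 + Y3 ^ 2) * h2) := by
          have h1' := mul_le_mul_of_nonneg_left key1 ht
          have h2' := mul_le_mul_of_nonneg_left key2 hu
          linarith
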